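/- arXiv:1409.5256 — 4 statements merged into one kernel-verified Lean document; each statement's English description precedes it below -/
import Mathlib

section
/- Let p > 0 and a, b > 0 be real numbers. Let X and Y be independent positive real random variables, where X has the generalized inverse Gaussian distribution with parameters (-p, a, b), i.e., density proportional to x^{-p-1} exp(-a x - b/x) on (0, ∞) with respect to Lebesgue measure, and Y has the gamma distribution with shape p and rate a, i.e., density (a^p / Γ(p)) y^{p-1} exp(-a y) on (0, ∞). Then U = (X+Y)⁻¹ and V = X⁻¹ - (X+Y)⁻¹ are independent, U has the generalized inverse Gaussian distribution with parameters (-p, b, a) (density proportional to u^{-p-1} exp(-b u - a/u) on (0, ∞)), and V has the gamma distribution with shape p and rate b. -/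
open MeasureTheory ProbabilityTheory Set

/-- Density (up to the constant `c`) of the generalized inverse Gaussian distribution
with parameters `(-p, a, b)` on `(0, ∞)`. -/
noncomputable def gigDensity (p a b c : ℝ) : ℝ → ENNReal := fun x =>
  ENNReal.ofReal (if 0 < x then c * x ^ (-p - 1) * Real.exp (-(a * x) - b / x) else 0)

/-- Density of the gamma distribution with shape `p` and rate `a` on `(0, ∞)`. -/
noncomputable def gammaDensity (p a : ℝ) : ℝ → ENNReal := fun y =>
  ENNReal.ofReal
    (if 0 < y then a ^ p / Real.Gamma p * y ^ (p - 1) * Real.exp (-(a * y)) else 0)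

/-! ### Auxiliary material -/

noncomputable def myT : ℝ × ℝ → ℝ × ℝ := fun z => ((z.1 + z.2)⁻¹, z.1⁻¹ - (z.1 + z.2)⁻¹)

lemma myT_measurable : Measurable myT :=
  ((measurable_fst.add measurable_snd).inv).prodMk
    (measurable_fst.inv.sub (measurable_fst.add measurable_snd).inv)

lemma myT_mem {z : ℝ × ℝ} (h1 : 0 < z.1) (h2 : 0 < z.2) :
    0 < (myT z).1 ∧ 0 < (myT z).2 := by
  have hs : 0 < z.1 + z.2 := by linarith
  constructor
  · exact inv_pos.2 hs
  · simp only [myT, sub_pos]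
    exact inv_strictAnti₀ h1 (by linarith)

lemma myT_invol {z : ℝ × ℝ} (h1 : 0 < z.1) (h2 : 0 < z.2) : myT (myT z) = z := by
  have hs : 0 < z.1 + z.2 := by linarith
  obtain ⟨x, y⟩ := z
  simp only [myT] at *
  have h1' : x ≠ 0 := ne_of_gt h1
  have hs' : x + y ≠ 0 := ne_of_gt hs
  have : (x + y)⁻¹ + (x⁻¹ - (x + y)⁻¹) = x⁻¹ := by ring
  rw [this, inv_inv, inv_inv, Prod.mk.injEq]
  constructor
  · rfl
  · ring

noncomputable def myL (z : ℝ × ℝ) : ℝ × ℝ →L[ℝ] ℝ × ℝ :=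
  ((-((z.1 + z.2) ^ 2)⁻¹) • (ContinuousLinearMap.fst ℝ ℝ ℝ + ContinuousLinearMap.snd ℝ ℝ ℝ)).prod
    ((-(z.1 ^ 2)⁻¹) • ContinuousLinearMap.fst ℝ ℝ ℝ -
      (-((z.1 + z.2) ^ 2)⁻¹) • (ContinuousLinearMap.fst ℝ ℝ ℝ + ContinuousLinearMap.snd ℝ ℝ ℝ))

lemma hasFDerivAt_inv_comp {E : Type*} [NormedAddCommGroup E] [NormedSpace ℝ E]
    {c : E → ℝ} {c' : E →L[ℝ] ℝ} {z : E} (hc : HasFDerivAt c c' z) (h : c z ≠ 0) :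
    HasFDerivAt (fun x => (c x)⁻¹) ((-((c z) ^ 2)⁻¹) • c') z := by
  exact (hasDerivAt_inv h).comp_hasFDerivAt z hc

lemma hasFDerivAt_myT {z : ℝ × ℝ} (h1 : 0 < z.1) (h2 : 0 < z.2) :
    HasFDerivAt myT (myL z) z := by
  have hs : z.1 + z.2 ≠ 0 := by positivity
  have hadd : HasFDerivAt (fun z : ℝ × ℝ => z.1 + z.2)
      (ContinuousLinearMap.fst ℝ ℝ ℝ + ContinuousLinearMap.snd ℝ ℝ ℝ) z :=
    hasFDerivAt_fst.add hasFDerivAt_snd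
  have hA := hasFDerivAt_inv_comp hadd hs
  have hB := hasFDerivAt_inv_comp (hasFDerivAt_fst (p := z) (𝕜 := ℝ)) (ne_of_gt h1)
  exact hA.prodMk (hB.sub hA)

lemma det_myL {z : ℝ × ℝ} :
    (myL z).det = -((z.1 ^ 2)⁻¹ * ((z.1 + z.2) ^ 2)⁻¹) := by
  have : (myL z).det = LinearMap.det ((myL z) : ℝ × ℝ →ₗ[ℝ] ℝ × ℝ) := rfl
  rw [this, ← LinearMap.det_toMatrix (Module.Basis.finTwoProd ℝ), Matrix.det_fin_two]
  simp [LinearMap.toMatrix_apply, Module.Basis.finTwoProd_zero, Module.Basis.finTwoProd_one,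
    Module.Basis.coe_finTwoProd_repr, myL]
  ring

lemma density_transform {p a b cX u v : ℝ} (hp : 0 < p) (ha : 0 < a) (hb : 0 < b)
    (hcX : 0 < cX) (hu : 0 < u) (hv : 0 < v) :
    (u ^ 2)⁻¹ * ((u + v) ^ 2)⁻¹ *
      ((cX * ((u + v)⁻¹) ^ (-p - 1) * Real.exp (-(a * (u + v)⁻¹) - b / (u + v)⁻¹)) *
       (a ^ p / Real.Gamma p * (u⁻¹ - (u + v)⁻¹) ^ (p - 1) *
          Real.exp (-(a * (u⁻¹ - (u + v)⁻¹))))) =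
    (cX * (a / b) ^ p * u ^ (-p - 1) * Real.exp (-(b * u) - a / u)) *
      (b ^ p / Real.Gamma p * v ^ (p - 1) * Real.exp (-(b * v))) := by
  have hw : 0 < u + v := by linarith
  have hΓ : 0 < Real.Gamma p := Real.Gamma_pos_of_pos hp
  have hy : u⁻¹ - (u + v)⁻¹ = v / (u * (u + v)) := by field_simp; ring
  rw [hy]
  have hL : 0 < (u ^ 2)⁻¹ * ((u + v) ^ 2)⁻¹ *
      ((cX * ((u + v)⁻¹) ^ (-p - 1) * Real.exp (-(a * (u + v)⁻¹) - b / (u + v)⁻¹)) *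
       (a ^ p / Real.Gamma p * (v / (u * (u + v))) ^ (p - 1) *
          Real.exp (-(a * (v / (u * (u + v))))))) := by positivity
  have hR : 0 < (cX * (a / b) ^ p * u ^ (-p - 1) * Real.exp (-(b * u) - a / u)) *
      (b ^ p / Real.Gamma p * v ^ (p - 1) * Real.exp (-(b * v))) := by positivity
  have n1 : u ≠ 0 := hu.ne'
  have n2 : v ≠ 0 := hv.ne'
  have n3 : u + v ≠ 0 := hw.ne'
  have n4 : a ≠ 0 := ha.ne'
  have n5 : b ≠ 0 := hb.ne'
  have n6 : cX ≠ 0 := hcX.ne'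
  have n7 : Real.Gamma p ≠ 0 := hΓ.ne'
  have hab : (0:ℝ) < a / b := div_pos ha hb
  have hwi : (0:ℝ) < (u + v)⁻¹ := inv_pos.2 hw
  have hvw : (0:ℝ) < v / (u * (u + v)) := by positivity
  have n8 : ((u + v)⁻¹) ^ (-p - 1) ≠ 0 := (Real.rpow_pos_of_pos hwi _).ne'
  have n9 : (v / (u * (u + v))) ^ (p - 1) ≠ 0 := (Real.rpow_pos_of_pos hvw _).ne'
  have n10 : a ^ p ≠ 0 := (Real.rpow_pos_of_pos ha _).ne'
  have n11 : b ^ p ≠ 0 := (Real.rpow_pos_of_pos hb _).ne'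
  have n12 : (a / b) ^ p ≠ 0 := (Real.rpow_pos_of_pos hab _).ne'
  have n13 : u ^ (-p - 1) ≠ 0 := (Real.rpow_pos_of_pos hu _).ne'
  have n14 : v ^ (p - 1) ≠ 0 := (Real.rpow_pos_of_pos hv _).ne'
  have n15 : u * (u + v) ≠ 0 := mul_ne_zero n1 n3
  have n16 : (u:ℝ) ^ 2 ≠ 0 := pow_ne_zero 2 n1
  have n17 : ((u+v):ℝ) ^ 2 ≠ 0 := pow_ne_zero 2 n3
  have e1 : b / (u + v)⁻¹ = b * (u + v) := by field_simp
  have e2 : a / u = a * u⁻¹ := by ring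
  rw [← Real.exp_log hL, ← Real.exp_log hR]
  congr 1
  rw [e1, e2]
  simp only [Real.log_mul, Real.log_div, Real.log_inv, Real.log_exp, Real.log_pow,
    Real.log_rpow, n1, n2, n3, n4, n5, n6, n7, n8, n9, n10, n11, n12, n13, n14, n15, n16, n17,
    hu, hv, hw, ha, hb, hab, hwi, hvw, ne_eq, not_false_eq_true, Real.exp_ne_zero,
    mul_ne_zero_iff, div_ne_zero_iff, and_true, true_and, and_self, inv_eq_zero]
  push_cast
  field_simp
  ring

lemma measurable_gigDensity (p a b c : ℝ) : Measurable (gigDensity p a b c) := by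
  apply ENNReal.measurable_ofReal.comp
  exact Measurable.ite measurableSet_Ioi
    (((measurable_const.mul (measurable_id'.pow_const _)).mul
      ((measurable_const.mul measurable_id').neg.sub (measurable_const.div measurable_id')).exp))
    measurable_const

lemma measurable_gammaDensity (p a : ℝ) : Measurable (gammaDensity p a) := by
  apply ENNReal.measurable_ofReal.comp
  exact Measurable.ite measurableSet_Ioi
    (((measurable_const.mul (measurable_id'.pow_const _)).mul
      (measurable_const.mul measurable_id').neg.exp))
    measurable_const

lemma lintegral_gammaDensity {p a : ℝ} (hp : 0 < p) (ha : 0 < a) :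
    ∫⁻ y, gammaDensity p a y = 1 := by
  rw [← ProbabilityTheory.lintegral_gammaPDF_eq_one hp ha]
  apply lintegral_congr_ae
  have h0 : (volume : Measure ℝ) {(0:ℝ)} = 0 := Real.volume_singleton
  filter_upwards [compl_mem_ae_iff.2 h0] with x hx
  have hx0 : x ≠ 0 := hx
  unfold gammaDensity gammaPDF gammaPDFReal
  rcases lt_or_gt_of_ne hx0 with h | h
  · rw [if_neg (by linarith), if_neg (by linarith)]
  · rw [if_pos h, if_pos h.le]

lemma prod_withDensity_eq {μ ν : Measure ℝ} [SigmaFinite μ] [SigmaFinite ν] {f g : ℝ → ENNReal}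
    (hf : Measurable f) (hg : Measurable g)
    [SigmaFinite (μ.withDensity f)] [SigmaFinite (ν.withDensity g)] :
    (μ.withDensity f).prod (ν.withDensity g) =
      (μ.prod ν).withDensity fun z => f z.1 * g z.2 :=
  Measure.prod_eq fun s t hs ht => by
    rw [withDensity_apply _ (hs.prod ht), ← Measure.prod_restrict,
      lintegral_prod_mul hf.aemeasurable hg.aemeasurable, withDensity_apply _ hs,
      withDensity_apply _ ht]

/-- The key change-of-variables step. -/
lemma map_myT_withDensity {p a b cX : ℝ} (hp : 0 < p) (ha : 0 < a) (hb : 0 < b) (hcX : 0 < cX) :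
    Measure.map myT
        (volume.withDensity fun z : ℝ × ℝ => gigDensity p a b cX z.1 * gammaDensity p a z.2) =
      volume.withDensity fun z : ℝ × ℝ =>
        gigDensity p b a (cX * (a / b) ^ p) z.1 * gammaDensity p b z.2 := by
  set s : Set (ℝ × ℝ) := Ioi (0:ℝ) ×ˢ Ioi (0:ℝ) with hs_def
  have hs : MeasurableSet s := measurableSet_Ioi.prod measurableSet_Ioi
  have hmem : ∀ z : ℝ × ℝ, z ∈ s ↔ 0 < z.1 ∧ 0 < z.2 := fun z => by
    simp [hs_def, Set.mem_prod]
  have hindic : ∀ (q r c : ℝ) (hc : 0 < c),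
      (fun z : ℝ × ℝ => gigDensity p q r c z.1 * gammaDensity p q z.2) =
        s.indicator (fun z : ℝ × ℝ => gigDensity p q r c z.1 * gammaDensity p q z.2) := by
    intro q r c _
    funext z
    by_cases h : z ∈ s
    · rw [Set.indicator_of_mem h]
    · rw [Set.indicator_of_notMem h]
      rw [hmem] at h
      push_neg at h
      by_cases h1 : 0 < z.1
      · have h2 := h h1
        have : gammaDensity p q z.2 = 0 := by
          simp [gammaDensity, if_neg (not_lt.2 h2), not_lt.2 h2]
        rw [this, mul_zero]
      · have : gigDensity p q r c z.1 = 0 := by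
          simp [gigDensity, h1]
        rw [this, zero_mul]
  have hinj : Set.InjOn myT s := by
    intro z hz w hw h
    rw [hmem] at hz hw
    rw [← myT_invol hz.1 hz.2, h, myT_invol hw.1 hw.2]
  rw [hindic a b cX hcX, withDensity_indicator hs,
    hindic b a (cX * (a / b) ^ p) (by positivity), withDensity_indicator hs]
  ext A hA
  rw [Measure.map_apply myT_measurable hA, withDensity_apply _ (myT_measurable hA),
    withDensity_apply _ hA, Measure.restrict_restrict (myT_measurable hA),
    Measure.restrict_restrict hA]
  have hset : myT ⁻¹' A ∩ s = myT '' (A ∩ s) := by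
    ext z
    constructor
    · rintro ⟨hzA, hzs⟩
      rw [hmem] at hzs
      refine ⟨myT z, ⟨hzA, ?_⟩, myT_invol hzs.1 hzs.2⟩
      rw [hmem]
      exact myT_mem hzs.1 hzs.2
    · rintro ⟨w, ⟨hwA, hws⟩, rfl⟩
      rw [hmem] at hws
      constructor
      · rw [Set.mem_preimage, myT_invol hws.1 hws.2]
        exact hwA
      · rw [hmem]
        exact myT_mem hws.1 hws.2
  have hAs : MeasurableSet (A ∩ s) := hA.inter hs
  have hderiv : ∀ x ∈ A ∩ s, HasFDerivWithinAt myT (myL x) (A ∩ s) x := fun x hx =>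
    (hasFDerivAt_myT ((hmem x).1 hx.2).1 ((hmem x).1 hx.2).2).hasFDerivWithinAt
  have hinj' : Set.InjOn myT (A ∩ s) := hinj.mono (Set.inter_subset_right)
  rw [hset, lintegral_image_eq_lintegral_abs_det_fderiv_mul volume hAs hderiv hinj']
  apply setLIntegral_congr_fun hAs
  intro x hx
  have hx1 : 0 < x.1 := ((hmem x).1 hx.2).1
  have hx2 : 0 < x.2 := ((hmem x).1 hx.2).2
  obtain ⟨hT1, hT2⟩ := myT_mem hx1 hx2
  have hdet : |(myL x).det| = (x.1 ^ 2)⁻¹ * ((x.1 + x.2) ^ 2)⁻¹ := by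
    rw [det_myL, abs_neg, abs_of_pos (by positivity)]
  simp only [gigDensity, gammaDensity, if_pos hx1, if_pos hx2, if_pos hT1, if_pos hT2]
  rw [hdet, ← ENNReal.ofReal_mul (by positivity), ← ENNReal.ofReal_mul (by positivity),
    ← ENNReal.ofReal_mul (by positivity)]
  congr 1
  have key := density_transform (u := x.1) (v := x.2) hp ha hb hcX hx1 hx2
  have eT1 : (myT x).1 = (x.1 + x.2)⁻¹ := rfl
  have eT2 : (myT x).2 = x.1⁻¹ - (x.1 + x.2)⁻¹ := rfl
  rw [eT1, eT2]
  linear_combination key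

/-- **The Matsumoto–Yor property** (univariate): if `X ~ GIG(-p, a, b)` and
`Y ~ Gamma(p, a)` are independent, then `U = (X+Y)⁻¹` and `V = X⁻¹ - (X+Y)⁻¹` are
independent, with `U ~ GIG(-p, b, a)` and `V ~ Gamma(p, b)`. -/
theorem matsumoto_yor_univariate {p a b : ℝ} (hp : 0 < p) (ha : 0 < a) (hb : 0 < b)
    {Ω : Type*} [MeasureSpace Ω] [IsProbabilityMeasure (ℙ : Measure Ω)]
    (X Y : Ω → ℝ) (hXm : Measurable X) (hYm : Measurable Y)
    (hXpos : ∀ ω, 0 < X ω) (hYpos : ∀ ω, 0 < Y ω)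
    (hindep : IndepFun X Y ℙ)
    (cX : ℝ) (hcX : 0 < cX)
    (hX : Measure.map X ℙ = volume.withDensity (gigDensity p a b cX))
    (hY : Measure.map Y ℙ = volume.withDensity (gammaDensity p a)) :
    IndepFun (fun ω => (X ω + Y ω)⁻¹) (fun ω => (X ω)⁻¹ - (X ω + Y ω)⁻¹) ℙ ∧
    (∃ cU > 0, Measure.map (fun ω => (X ω + Y ω)⁻¹) ℙ =
      volume.withDensity (gigDensity p b a cU)) ∧
    Measure.map (fun ω => (X ω)⁻¹ - (X ω + Y ω)⁻¹) ℙ =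
      volume.withDensity (gammaDensity p b) := by
  set U : Ω → ℝ := fun ω => (X ω + Y ω)⁻¹ with hU_def
  set V : Ω → ℝ := fun ω => (X ω)⁻¹ - (X ω + Y ω)⁻¹ with hV_def
  set cU : ℝ := cX * (a / b) ^ p with hcU_def
  have hcU : 0 < cU := by positivity
  have hUm : Measurable U := (hXm.add hYm).inv
  have hVm : Measurable V := hXm.inv.sub (hXm.add hYm).inv
  -- probability instances for the given laws
  have hPX : IsProbabilityMeasure (volume.withDensity (gigDensity p a b cX)) := by
    rw [← hX]; exact Measure.isProbabilityMeasure_map hXm.aemeasurable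
  have hPY : IsProbabilityMeasure (volume.withDensity (gammaDensity p a)) := by
    rw [← hY]; exact Measure.isProbabilityMeasure_map hYm.aemeasurable
  -- joint law of (X, Y)
  have hpairm : Measurable fun ω => (X ω, Y ω) := hXm.prodMk hYm
  have hjoint : Measure.map (fun ω => (X ω, Y ω)) ℙ =
      volume.withDensity fun z : ℝ × ℝ => gigDensity p a b cX z.1 * gammaDensity p a z.2 := by
    rw [(indepFun_iff_map_prod_eq_prod_map_map hXm.aemeasurable hYm.aemeasurable).1 hindep,
      hX, hY, prod_withDensity_eq (measurable_gigDensity p a b cX) (measurable_gammaDensity p a),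
      ← Measure.volume_eq_prod]
  -- joint law of (U, V)
  have hUV : Measure.map (fun ω => (U ω, V ω)) ℙ =
      volume.withDensity fun z : ℝ × ℝ => gigDensity p b a cU z.1 * gammaDensity p b z.2 := by
    have hcomp : (fun ω => (U ω, V ω)) = myT ∘ fun ω => (X ω, Y ω) := rfl
    rw [hcomp, ← Measure.map_map myT_measurable hpairm, hjoint,
      map_myT_withDensity hp ha hb hcX]
  -- total masses
  have hPUV : IsProbabilityMeasure (volume.withDensity fun z : ℝ × ℝ =>
      gigDensity p b a cU z.1 * gammaDensity p b z.2) := by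
    rw [← hUV]
    exact Measure.isProbabilityMeasure_map (hUm.prodMk hVm).aemeasurable
  have hmassV : ∫⁻ y, gammaDensity p b y = 1 := lintegral_gammaDensity hp hb
  have hmassU : ∫⁻ x, gigDensity p b a cU x = 1 := by
    have h1 : (volume.withDensity fun z : ℝ × ℝ =>
        gigDensity p b a cU z.1 * gammaDensity p b z.2) univ = 1 := hPUV.measure_univ
    rw [withDensity_apply _ MeasurableSet.univ, Measure.restrict_univ, Measure.volume_eq_prod,
      lintegral_prod_mul (measurable_gigDensity p b a cU).aemeasurable
        (measurable_gammaDensity p b).aemeasurable, hmassV, mul_one] at h1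
    exact h1
  have hPU : IsProbabilityMeasure (volume.withDensity (gigDensity p b a cU)) := by
    constructor
    rw [withDensity_apply _ MeasurableSet.univ, Measure.restrict_univ]
    exact hmassU
  have hPV : IsProbabilityMeasure (volume.withDensity (gammaDensity p b)) := by
    constructor
    rw [withDensity_apply _ MeasurableSet.univ, Measure.restrict_univ]
    exact hmassV
  -- split the joint law
  have hsplit : (volume.withDensity fun z : ℝ × ℝ =>
      gigDensity p b a cU z.1 * gammaDensity p b z.2) =
      (volume.withDensity (gigDensity p b a cU)).prod
        (volume.withDensity (gammaDensity p b)) := by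
    rw [prod_withDensity_eq (measurable_gigDensity p b a cU) (measurable_gammaDensity p b),
      ← Measure.volume_eq_prod]
  rw [hsplit] at hUV
  -- marginals
  have hmapU : Measure.map U ℙ = volume.withDensity (gigDensity p b a cU) := by
    have : U = Prod.fst ∘ fun ω => (U ω, V ω) := rfl
    rw [this, ← Measure.map_map measurable_fst (hUm.prodMk hVm), hUV,
      Measure.map_fst_prod, measure_univ, one_smul]
  have hmapV : Measure.map V ℙ = volume.withDensity (gammaDensity p b) := by
    have : V = Prod.snd ∘ fun ω => (U ω, V ω) := rfl
    rw [this, ← Measure.map_map measurable_snd (hUm.prodMk hVm), hUV,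
      Measure.map_snd_prod, measure_univ, one_smul]
  refine ⟨?_, ⟨cU, hcU, hmapU⟩, hmapV⟩
  rw [indepFun_iff_map_prod_eq_prod_map_map hUm.aemeasurable hVm.aemeasurable, hUV, hmapU, hmapV]
end

section
/- Let r ≥ 1 and let f₁, f₂, f₃ be continuous real-valued functions on the cone V₊ of r×r real symmetric positive definite matrices satisfying f₁(x) + f₂(y) = f₃(x^{1/2} · y · x^{1/2}) for all x, y ∈ V₊, where x^{1/2} denotes the unique symmetric positive definite square root of x. Then there exist constants q, γ₁, γ₂ ∈ ℝ such that for every x ∈ V₊: f₁(x) = q log det x + γ₁, f₂(x) = q log det x + γ₂, and f₃(x) = q log det x + γ₁ + γ₂. -/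
open Matrix

section OldSqrt

open scoped ComplexOrder

/-- The square root of a positive semidefinite matrix, as `Matrix.PosSemidef.sqrt` was defined
in the older Mathlib (removed since). -/
noncomputable def Matrix.PosSemidef.sqrt {n : Type*} [Fintype n] [DecidableEq n] {𝕜 : Type*}
    [RCLike 𝕜] {A : Matrix n n 𝕜} (hA : A.PosSemidef) : Matrix n n 𝕜 :=
  hA.1.eigenvectorUnitary.1 * diagonal ((↑) ∘ (√·) ∘ hA.1.eigenvalues) *
    (star hA.1.eigenvectorUnitary : Matrix n n 𝕜)

end OldSqrt

open scoped MatrixOrder in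
theorem Matrix.PosSemidef.sqrt_eq_cfcSqrt {n : Type*} [Fintype n] [DecidableEq n] {A : Matrix n n ℝ}
    (hA : A.PosSemidef) : hA.sqrt = CFC.sqrt A := by
  rw [CFC.sqrt_eq_real_sqrt A hA.nonneg, cfcₙ_eq_cfc (hf0 := Real.sqrt_zero), hA.1.cfc_eq,
    IsHermitian.cfc, Matrix.PosSemidef.sqrt]
  simp

open scoped MatrixOrder in
theorem Matrix.PosSemidef.sqrt_mul_self {n : Type*} [Fintype n] [DecidableEq n] {A : Matrix n n ℝ}
    (hA : A.PosSemidef) : hA.sqrt * hA.sqrt = A := by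
  rw [hA.sqrt_eq_cfcSqrt]
  exact CFC.sqrt_mul_sqrt_self A hA.nonneg

open scoped MatrixOrder in
theorem Matrix.PosSemidef.eq_sqrt_of_sq_eq {n : Type*} [Fintype n] [DecidableEq n]
    {A B : Matrix n n ℝ} (hB : B.PosSemidef) (hA : A.PosSemidef) (hBA : B ^ 2 = A) :
    B = hA.sqrt := by
  rw [hA.sqrt_eq_cfcSqrt]
  exact (CFC.sqrt_unique (by rw [← pow_two]; exact hBA) hB.nonneg).symm

namespace LogPexiderAux

variable {r : ℕ}

local notation "Mat" => Matrix (Fin r) (Fin r) ℝ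

/-- transpose of a standard basis matrix -/
lemma transpose_stdBasisMatrix (i j : Fin r) (c : ℝ) :
    (single i j c)ᵀ = single j i c := by
  ext a b
  simp only [transpose_apply, single, of_apply]
  by_cases h1 : i = b <;> by_cases h2 : j = a <;> simp [h1, h2, and_comm]

/-- The 5-parameter family `1 + p Eᵢᵢ + q Eⱼⱼ + s Eᵢⱼ + t Eⱼᵢ`. -/
noncomputable def Q (i j : Fin r) (p q s t : ℝ) : Mat :=
  1 + single i i p + single j j q + single i j s + single j i t

lemma Q_transpose (i j : Fin r) (p q s t : ℝ) : (Q i j p q s t)ᵀ = Q i j p q t s := by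
  simp [Q, transpose_add, transpose_stdBasisMatrix]
  abel

lemma Q_mul (i j : Fin r) (hij : i ≠ j) (p q s t p' q' s' t' : ℝ) :
    Q i j p q s t * Q i j p' q' s' t' =
      Q i j (p + p' + p*p' + s*t') (q + q' + q*q' + t*s')
        (s + s' + p*s' + s*q') (t + t' + q*t' + t*p') := by
  have hji : j ≠ i := hij.symm
  simp only [Q, add_mul, mul_add, one_mul, mul_one,
    single_mul_single_same, single_mul_single_of_ne _ _ _ _ hij, single_mul_single_of_ne _ _ _ _ hji,
    single_add]
  abel

lemma Q_zero (i j : Fin r) : Q i j 0 0 0 0 = 1 := by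
  simp [Q]


lemma dotProduct_stdBasisMatrix_mulVec (a b : Fin r) (m : ℝ) (x : Fin r → ℝ) :
    x ⬝ᵥ (single a b m *ᵥ x) = x a * (m * x b) := by
  rw [single_mulVec]
  simp [dotProduct, Function.update, Finset.sum_ite_eq']

lemma posDef_Q (i j : Fin r) (hij : i ≠ j) (p q s : ℝ) (hp : 0 ≤ p) (hq : 0 ≤ q)
    (hs : s ^ 2 < (1 + p) * (1 + q)) : (Q i j p q s s).PosDef := by
  refine Matrix.PosDef.of_dotProduct_mulVec_pos ?_ ?_
  · show _ = _
    rw [conjTranspose_eq_transpose_of_trivial, Q_transpose]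
  · intro x hx
    have hsx : star x = x := by simp
    rw [hsx]
    have expand : x ⬝ᵥ (Q i j p q s s *ᵥ x) =
        (∑ k, x k * x k) + x i * (p * x i) + x j * (q * x j)
          + x i * (s * x j) + x j * (s * x i) := by
      simp only [Q, add_mulVec, one_mulVec, dotProduct_add, dotProduct_stdBasisMatrix_mulVec]
      rfl
    rw [expand]
    have hsplit : (∑ k, x k * x k) =
        (∑ k ∈ (Finset.univ.erase i).erase j, x k * x k) + x j * x j + x i * x i := by
      rw [Finset.sum_erase_add _ _ (by simp [Finset.mem_erase, hij.symm]),
        Finset.sum_erase_add _ _ (by simp)]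
    rw [hsplit]
    set S := ∑ k ∈ (Finset.univ.erase i).erase j, x k * x k with hS
    have hSnn : 0 ≤ S := Finset.sum_nonneg fun k _ => mul_self_nonneg _
    set a := x i
    set b := x j
    by_cases hab : a = 0 ∧ b = 0
    · obtain ⟨ha, hb⟩ := hab
      obtain ⟨k, hk⟩ : ∃ k, x k ≠ 0 := by
        by_contra h
        push_neg at h
        exact hx (funext h)
      have hki : k ≠ i := fun h => hk (h ▸ ha)
      have hkj : k ≠ j := fun h => hk (h ▸ hb)
      have hmem : k ∈ (Finset.univ.erase i).erase j := by
        simp [Finset.mem_erase, hki, hkj]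
      have hpos : 0 < x k * x k := mul_self_pos.mpr hk
      have hle : x k * x k ≤ S :=
        Finset.single_le_sum (fun m _ => mul_self_nonneg (x m)) hmem
      have hSpos : 0 < S := lt_of_lt_of_le hpos hle
      rw [ha, hb]
      ring_nf
      linarith
    · rw [not_and_or] at hab
      rcases eq_or_ne b 0 with hb | hb
      · have ha : a ≠ 0 := by tauto
        have : 0 < a * a := mul_self_pos.mpr ha
        rw [hb]
        nlinarith
      · have h1p : 0 < 1 + p := by linarith
        have key : 0 < (1 + p) * a ^ 2 + (1 + q) * b ^ 2 + 2 * s * a * b := by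
          have h2 : 0 < ((1 + p) * (1 + q) - s ^ 2) * b ^ 2 :=
            mul_pos (by linarith) (by positivity)
          have h3 : 0 ≤ ((1 + p) * a + s * b) ^ 2 := sq_nonneg _
          have := mul_pos h1p (show (0:ℝ) < ((1+p)*a + s*b)^2 + ((1+p)*(1+q) - s^2) * b^2 by nlinarith)
          nlinarith
        nlinarith

lemma transvection_eq_Q (i j : Fin r) (c : ℝ) :
    transvection i j c = Q i j 0 0 c 0 := by
  simp [transvection, Q]

lemma Q_congr (i j : Fin r) {a b c d a' b' c' d' : ℝ} (h1 : a = a') (h2 : b = b')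
    (h3 : c = c') (h4 : d = d') : Q i j a b c d = Q i j a' b' c' d' := by
  rw [h1, h2, h3, h4]

/-- Decomposition of a transvection as a product of three positive definite matrices. -/
lemma transvection_eq_QQQ (i j : Fin r) (hij : i ≠ j) (c : ℝ) :
    transvection i j c =
      Q i j |c| 0 0 0 * Q i j (1 + |c|)⁻¹ 0 (if 0 ≤ c then 1 else -1) (if 0 ≤ c then 1 else -1)
        * Q i j 0 1 (-(if 0 ≤ c then 1 else -1)) (-(if 0 ≤ c then 1 else -1)) := by
  have hne : (1 : ℝ) + |c| ≠ 0 := by positivity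
  rw [Q_mul i j hij, Q_mul i j hij, transvection_eq_Q]
  apply Q_congr i j <;>
  · by_cases h : 0 ≤ c
    · simp only [h, if_true, abs_of_nonneg h]
      field_simp
      try ring
    · simp only [h, if_false]
      rw [show |c| = -c from abs_of_neg (not_le.1 h)] at hne ⊢
      field_simp
      try ring

lemma posDef_QA (i j : Fin r) (hij : i ≠ j) (δ : ℝ) (hδ : 0 ≤ δ) :
    (Q i j δ 0 0 0).PosDef := by
  have h := posDef_Q i j hij δ 0 0 hδ le_rfl (by nlinarith)
  simpa using h

lemma posDef_QM (i j : Fin r) (hij : i ≠ j) (γ f : ℝ) (hγ : 0 < γ) (hf : f * f = 1) :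
    (Q i j γ 0 f f).PosDef :=
  posDef_Q i j hij γ 0 f hγ.le le_rfl (by nlinarith)

lemma posDef_QC (i j : Fin r) (hij : i ≠ j) (f : ℝ) (hf : f * f = 1) :
    (Q i j 0 1 (-f) (-f)).PosDef :=
  posDef_Q i j hij 0 1 (-f) le_rfl zero_le_one (by nlinarith)

/-- congruence by a matrix with invertible determinant preserves positive definiteness -/
lemma posDef_congruence {m z : Mat} (hz : z.PosDef) (hm : m.det ≠ 0) :
    (m * z * mᵀ).PosDef := by
  refine Matrix.PosDef.of_dotProduct_mulVec_pos ?_ ?_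
  · show _ = _
    rw [conjTranspose_eq_transpose_of_trivial]
    rw [transpose_mul, transpose_mul, transpose_transpose, ← Matrix.mul_assoc]
    have hherm : zᵀ = z := by
      have := hz.isHermitian
      rwa [IsHermitian, conjTranspose_eq_transpose_of_trivial] at this
    rw [hherm]
  · intro x hx
    have hsx : star x = x := by simp
    rw [hsx]
    have h1 : (m * z * mᵀ) *ᵥ x = m *ᵥ (z *ᵥ (mᵀ *ᵥ x)) := by
      rw [← mulVec_mulVec, ← mulVec_mulVec]
    rw [h1]
    have h2 : x ⬝ᵥ (m *ᵥ (z *ᵥ (mᵀ *ᵥ x))) = (mᵀ *ᵥ x) ⬝ᵥ (z *ᵥ (mᵀ *ᵥ x)) := by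
      rw [mulVec_transpose, dotProduct_mulVec]
    rw [h2]
    have hy : mᵀ *ᵥ x ≠ 0 := by
      intro h
      apply hx
      have hdet : mᵀ.det ≠ 0 := by rwa [det_transpose]
      have : Function.Injective (mᵀ.mulVec) :=
        mulVec_injective_iff_isUnit.mpr (isUnit_iff_isUnit_det _ |>.mpr (isUnit_iff_ne_zero.mpr hdet))
      apply this
      simpa using h
    have := hz.dotProduct_mulVec_pos hy
    simpa using this

/-- `Wm i j` is the rotation by π/2 in the `(i,j)` plane. -/
noncomputable def Wm (i j : Fin r) : Mat := Q i j (-1) (-1) 1 (-1)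

lemma Wm_eq_transvections (i j : Fin r) (hij : i ≠ j) :
    Wm i j = transvection i j 1 * transvection j i (-1) * transvection i j 1 := by
  have h1 : transvection i j (1:ℝ) = Q i j 0 0 1 0 := transvection_eq_Q i j 1
  have h2 : transvection j i (-1:ℝ) = Q i j 0 0 0 (-1) := by
    simp [transvection, Q]
  rw [h1, h2, Q_mul i j hij, Q_mul i j hij, Wm]
  apply Q_congr i j <;> norm_num

lemma Wm_mul_transpose (i j : Fin r) (hij : i ≠ j) : Wm i j * (Wm i j)ᵀ = 1 := by
  rw [Wm, Q_transpose, Q_mul i j hij]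
  rw [show (1:Mat) = Q i j 0 0 0 0 from (Q_zero i j).symm]
  apply Q_congr i j <;> norm_num

lemma Wm_sq (i j : Fin r) (hij : i ≠ j) :
    Wm i j * Wm i j = Q i j (-2) (-2) 0 0 := by
  rw [Wm, Q_mul i j hij]
  apply Q_congr i j <;> norm_num

lemma Q_flip_eq_diagonal (i j : Fin r) (hij : i ≠ j) :
    Q i j (-2) (-2) 0 0 = diagonal (fun k => if k = i ∨ k = j then (-1:ℝ) else 1) := by
  ext a b
  simp only [Q, single_zero, add_zero, Matrix.add_apply, one_apply,
    diagonal_apply, single, of_apply]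
  rcases eq_or_ne a b with rfl | hab
  · rcases eq_or_ne a i with rfl | hai
    · simp [hij.symm]
      norm_num
    · rcases eq_or_ne a j with rfl | haj
      · simp [hij, Ne.symm hai]
        norm_num
      · simp [Ne.symm hai, Ne.symm haj, hai, haj]
  · have h1 : ¬(i = a ∧ i = b) := fun ⟨u, v⟩ => hab (u ▸ v ▸ rfl)
    have h2 : ¬(j = a ∧ j = b) := fun ⟨u, v⟩ => hab (u ▸ v ▸ rfl)
    simp [hab, h1, h2]

lemma diagonal_mul_stdBasisMatrix_mul_diagonal (u w : Fin r → ℝ) (i j : Fin r) (c : ℝ) :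
    diagonal u * single i j c * diagonal w = single i j (u i * c * w j) := by
  ext a b
  rw [mul_diagonal, diagonal_mul]
  rcases eq_or_ne i a with rfl | hia
  · rcases eq_or_ne j b with rfl | hjb
    · simp
    · simp [single_apply_of_ne, fun h : j = b => hjb h, hjb]
  · simp [hia]

lemma Wm_apply (i j : Fin r) (hij : i ≠ j) (a b : Fin r) :
    Wm i j a b = if a = i then (if b = j then 1 else 0)
      else if a = j then (if b = i then -1 else 0)
      else (if a = b then 1 else 0) := by
  simp only [Wm, Q, Matrix.add_apply, one_apply, single, of_apply]
  by_cases hai : a = i <;> by_cases haj : a = j <;> by_cases hbi : b = i <;>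
    by_cases hbj : b = j <;> by_cases hab : a = b <;> simp_all <;>
    simp_all [eq_comm]

lemma Wm_mul_diagonal (i j : Fin r) (hij : i ≠ j) (v : Fin r → ℝ) :
    Wm i j * diagonal v = diagonal (fun k => v (Equiv.swap i j k)) * Wm i j := by
  ext a b
  rw [mul_diagonal, diagonal_mul, Wm_apply i j hij]
  rcases eq_or_ne a i with rfl | hai
  · rcases eq_or_ne b j with rfl | hbj
    · simp [Equiv.swap_apply_left]
    · simp [hbj]
  · rcases eq_or_ne a j with rfl | haj
    · rcases eq_or_ne b i with rfl | hbi
      · simp [hai, Equiv.swap_apply_right]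
      · simp [hai, hbi]
    · rcases eq_or_ne a b with rfl | hab
      · simp [hai, haj, Equiv.swap_apply_of_ne_of_ne hai haj]
      · simp [hai, haj, hab]

lemma Wm_conj_diagonal (i j : Fin r) (hij : i ≠ j) (v : Fin r → ℝ) :
    Wm i j * diagonal v * (Wm i j)ᵀ = diagonal (fun k => v (Equiv.swap i j k)) := by
  rw [Wm_mul_diagonal i j hij, Matrix.mul_assoc, Wm_mul_transpose i j hij, Matrix.mul_one]

lemma sqrt_eq_of_posDef {p x : Mat} (hp : p.PosDef) (hx : x.PosSemidef) (h : p * p = x) :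
    hx.sqrt = p :=
  (Matrix.PosSemidef.eq_sqrt_of_sq_eq hp.posSemidef hx (by rw [pow_two]; exact h)).symm

lemma sqrt_one' (h : (1 : Mat).PosSemidef) : h.sqrt = 1 :=
  sqrt_eq_of_posDef Matrix.PosDef.one h (by rw [mul_one])

lemma sqrt_diagonal' (u : Fin r → ℝ) (hu : ∀ k, 0 < u k)
    (h : (diagonal u).PosSemidef) :
    h.sqrt = diagonal (fun k => Real.sqrt (u k)) := by
  apply sqrt_eq_of_posDef
  · exact Matrix.PosDef.diagonal (fun k => Real.sqrt_pos.mpr (hu k))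
  · rw [diagonal_mul_diagonal]
    have : (fun k => Real.sqrt (u k) * Real.sqrt (u k)) = u :=
      funext fun k => Real.mul_self_sqrt (hu k).le
    rw [this]

section G

variable {g : Matrix (Fin r) (Fin r) ℝ → ℝ}

/-- congruence property by positive definite matrices -/
def HA (g : Matrix (Fin r) (Fin r) ℝ → ℝ) : Prop :=
  ∀ p z : Mat, p.PosDef → z.PosDef → g (p * z * p) = g (p * p) + g z

/-- multiplicativity on positive diagonal matrices -/
def HD (g : Matrix (Fin r) (Fin r) ℝ → ℝ) : Prop :=
  ∀ u v : Fin r → ℝ, (∀ k, 0 < u k) → (∀ k, 0 < v k) →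
    g (diagonal (fun k => u k * v k)) = g (diagonal u) + g (diagonal v)

lemma g_one (hD : HD g) : g 1 = 0 := by
  have h := hD (fun _ => 1) (fun _ => 1) (fun _ => one_pos) (fun _ => one_pos)
  simp only [mul_one] at h
  rw [diagonal_one] at h
  linarith

lemma g_transvection_conj (hA : HA g) (hD : HD g) (i j : Fin r) (hij : i ≠ j) :
    ∀ (c : ℝ) {z : Mat}, z.PosDef →
      g (transvection i j c * z * (transvection i j c)ᵀ) = g z := by
  have h1 : g (1:Mat) = 0 := g_one hD
  have key : ∀ c : ℝ, ∃ κ : ℝ, ∀ z : Mat, z.PosDef →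
      g (transvection i j c * z * (transvection i j c)ᵀ) = κ + g z := by
    intro c
    set f : ℝ := if 0 ≤ c then 1 else -1 with hf
    have hff : f * f = 1 := by by_cases h : 0 ≤ c <;> simp [hf, h]
    have hγ : 0 < (1 + |c|)⁻¹ := by positivity
    set A := Q i j |c| 0 0 0 with hAdef
    set M := Q i j (1 + |c|)⁻¹ 0 f f with hMdef
    set C := Q i j 0 1 (-f) (-f) with hCdef
    have hApd : A.PosDef := posDef_QA i j hij _ (abs_nonneg c)
    have hMpd : M.PosDef := posDef_QM i j hij _ f hγ hff
    have hCpd : C.PosDef := posDef_QC i j hij f hff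
    have hAs : Aᵀ = A := by rw [hAdef, Q_transpose]
    have hMs : Mᵀ = M := by rw [hMdef, Q_transpose]
    have hCs : Cᵀ = C := by rw [hCdef, Q_transpose]
    have hT : transvection i j c = A * M * C := transvection_eq_QQQ i j hij c
    refine ⟨g (A*A) + g (M*M) + g (C*C), fun z hz => ?_⟩
    have hTt : (transvection i j c)ᵀ = C * M * A := by
      rw [hT, transpose_mul, transpose_mul, hAs, hMs, hCs, Matrix.mul_assoc]
    have e : transvection i j c * z * (transvection i j c)ᵀ
        = A * (M * (C * z * C) * M) * A := by
      rw [hTt, hT]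
      simp only [Matrix.mul_assoc]
    have hCzC : (C * z * C).PosDef := by
      have := posDef_congruence hz hCpd.det_pos.ne'
      rwa [hCs] at this
    have hMXM : (M * (C * z * C) * M).PosDef := by
      have := posDef_congruence hCzC hMpd.det_pos.ne'
      rwa [hMs] at this
    rw [e, hA A _ hApd hMXM, hA M _ hMpd hCzC, hA C z hCpd hz]
    ring
  choose κ hκ using key
  have hadd : ∀ c₁ c₂ : ℝ, κ (c₁ + c₂) = κ c₁ + κ c₂ := by
    intro c₁ c₂
    have e1 := hκ (c₁ + c₂) 1 Matrix.PosDef.one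
    have hmul : transvection i j (c₁ + c₂) = transvection i j c₁ * transvection i j c₂ :=
      (transvection_mul_transvection_same i j hij c₁ c₂).symm
    have hPD : (transvection i j c₂ * 1 * (transvection i j c₂)ᵀ).PosDef :=
      posDef_congruence Matrix.PosDef.one
        (by rw [det_transvection_of_ne i j hij]; norm_num)
    have e2 : transvection i j (c₁+c₂) * 1 * (transvection i j (c₁+c₂))ᵀ
        = transvection i j c₁ * (transvection i j c₂ * 1 * (transvection i j c₂)ᵀ)
            * (transvection i j c₁)ᵀ := by
      rw [hmul, transpose_mul]
      simp only [Matrix.mul_assoc, Matrix.one_mul, Matrix.mul_one]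
    rw [e2, hκ c₁ _ hPD, hκ c₂ 1 Matrix.PosDef.one] at e1
    linarith
  have hscale : ∀ c : ℝ, κ (2 * c) = κ c := by
    intro c
    set d : Mat := diagonal (fun k => if k = i then (2:ℝ) else 1) with hd
    set d' : Mat := diagonal (fun k => if k = i then (2:ℝ)⁻¹ else 1) with hd'
    have hdpd : d.PosDef := Matrix.PosDef.diagonal (fun k => by by_cases h : k = i <;> simp [h] <;> norm_num)
    have hd'pd : d'.PosDef := Matrix.PosDef.diagonal (fun k => by by_cases h : k = i <;> simp [h] <;> norm_num)
    have hds : dᵀ = d := diagonal_transpose _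
    have hd's : d'ᵀ = d' := diagonal_transpose _
    have hconj : d * transvection i j c * d' = transvection i j (2 * c) := by
      rw [transvection, transvection, mul_add, mul_one, add_mul]
      congr 1
      · rw [hd, hd', diagonal_mul_diagonal]
        rw [show (fun k => (if k = i then (2:ℝ) else 1) * (if k = i then (2:ℝ)⁻¹ else 1))
            = fun _ => 1 from funext fun k => by split <;> norm_num, diagonal_one]
      · rw [hd, hd', diagonal_mul_stdBasisMatrix_mul_diagonal]
        simp [hij.symm]
    have hconjT : d' * (transvection i j c)ᵀ * d = (transvection i j (2*c))ᵀ := by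
      rw [← hconj, transpose_mul, transpose_mul, hds, hd's]
      simp only [Matrix.mul_assoc]
    have h2 := hκ (2*c) 1 Matrix.PosDef.one
    have hd'1 : (d' * 1 * d').PosDef := by
      have := posDef_congruence Matrix.PosDef.one hd'pd.det_pos.ne'
      rwa [hd's] at this
    have hT1 : (transvection i j c * (d' * 1 * d') * (transvection i j c)ᵀ).PosDef :=
      posDef_congruence hd'1 (by rw [det_transvection_of_ne i j hij]; norm_num)
    have e : transvection i j (2*c) * 1 * (transvection i j (2*c))ᵀ
        = d * (transvection i j c * (d' * 1 * d') * (transvection i j c)ᵀ) * d := by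
      rw [← hconjT, ← hconj]
      simp only [Matrix.mul_assoc, Matrix.one_mul, Matrix.mul_one]
    rw [e, hA d _ hdpd hT1, hκ c _ hd'1, hA d' 1 hd'pd Matrix.PosDef.one] at h2
    have hdd : g (d*d) + g (d'*d') = 0 := by
      have h3 := hD (fun k => if k = i then (2:ℝ) else 1) (fun k => if k = i then (2:ℝ)⁻¹ else 1)
        (fun k => by by_cases h : k = i <;> simp [h] <;> norm_num) (fun k => by by_cases h : k = i <;> simp [h] <;> norm_num)
      rw [show (fun k => (if k = i then (2:ℝ) else 1) * (if k = i then (2:ℝ)⁻¹ else 1))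
          = fun _ => 1 from funext fun k => by split <;> norm_num, diagonal_one] at h3
      have h4 := hD (fun k => if k = i then (2:ℝ) else 1) (fun k => if k = i then (2:ℝ) else 1)
        (fun k => by by_cases h : k = i <;> simp [h] <;> norm_num) (fun k => by by_cases h : k = i <;> simp [h] <;> norm_num)
      have h5 := hD (fun k => if k = i then (2:ℝ)⁻¹ else 1) (fun k => if k = i then (2:ℝ)⁻¹ else 1)
        (fun k => by by_cases h : k = i <;> simp [h] <;> norm_num) (fun k => by by_cases h : k = i <;> simp [h] <;> norm_num)
      have hdd2 : d * d = diagonal (fun k =>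
          (if k = i then (2:ℝ) else 1) * (if k = i then (2:ℝ) else 1)) := by
        rw [hd, diagonal_mul_diagonal]
      have hd'd2 : d' * d' = diagonal (fun k =>
          (if k = i then (2:ℝ)⁻¹ else 1) * (if k = i then (2:ℝ)⁻¹ else 1)) := by
        rw [hd', diagonal_mul_diagonal]
      rw [hdd2, hd'd2, h4, h5]
      linarith
    linarith
  intro c z hz
  have hzero : κ c = 0 := by
    have ha := hadd c c
    have hs := hscale c
    rw [two_mul] at hs
    linarith
  rw [hκ c z hz, hzero, zero_add]

end G

section G2

variable {g : Matrix (Fin r) (Fin r) ℝ → ℝ}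

open TransvectionStruct in
lemma g_list_conj (hA : HA g) (hD : HD g) :
    ∀ (L : List (TransvectionStruct (Fin r) ℝ)) {z : Mat}, z.PosDef →
      g ((L.map toMatrix).prod * z * ((L.map toMatrix).prod)ᵀ) = g z := by
  intro L
  induction L with
  | nil => intro z hz; simp
  | cons t L IH =>
    intro z hz
    have hdet : ((L.map toMatrix).prod).det = 1 := det_toMatrix_prod L
    have hPD : ((L.map toMatrix).prod * z * ((L.map toMatrix).prod)ᵀ).PosDef :=
      posDef_congruence hz (by rw [hdet]; norm_num)
    have e : ((t :: L).map toMatrix).prod = t.toMatrix * (L.map toMatrix).prod := by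
      simp
    rw [e, transpose_mul]
    obtain ⟨ti, tj, htij, tc⟩ := t
    rw [toMatrix_mk]
    have e2 : transvection ti tj tc * (L.map toMatrix).prod * z *
        (((L.map toMatrix).prod)ᵀ * (transvection ti tj tc)ᵀ)
        = transvection ti tj tc * ((L.map toMatrix).prod * z * ((L.map toMatrix).prod)ᵀ)
          * (transvection ti tj tc)ᵀ := by
      simp only [Matrix.mul_assoc]
    rw [e2, g_transvection_conj hA hD ti tj htij tc hPD]
    exact IH hz

lemma g_Wm_conj (hA : HA g) (hD : HD g) (i j : Fin r) (hij : i ≠ j) {z : Mat}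
    (hz : z.PosDef) : g (Wm i j * z * (Wm i j)ᵀ) = g z := by
  have hdet1 : (transvection i j (1:ℝ)).det = 1 := det_transvection_of_ne i j hij 1
  have hdet2 : (transvection j i (-1:ℝ)).det = 1 := det_transvection_of_ne j i hij.symm (-1)
  have hPD1 : (transvection i j (1:ℝ) * z * (transvection i j (1:ℝ))ᵀ).PosDef :=
    posDef_congruence hz (by rw [hdet1]; norm_num)
  have hPD2 : (transvection j i (-1:ℝ) * (transvection i j (1:ℝ) * z * (transvection i j (1:ℝ))ᵀ)
      * (transvection j i (-1:ℝ))ᵀ).PosDef :=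
    posDef_congruence hPD1 (by rw [hdet2]; norm_num)
  rw [Wm_eq_transvections i j hij]
  have e : transvection i j 1 * transvection j i (-1) * transvection i j 1 * z *
      (transvection i j 1 * transvection j i (-1) * transvection i j 1)ᵀ
      = transvection i j 1 * (transvection j i (-1) *
          (transvection i j 1 * z * (transvection i j 1)ᵀ) * (transvection j i (-1))ᵀ)
        * (transvection i j 1)ᵀ := by
    rw [transpose_mul, transpose_mul]
    simp only [Matrix.mul_assoc]
  rw [e, g_transvection_conj hA hD i j hij 1 hPD2,
    g_transvection_conj hA hD j i hij.symm (-1) hPD1,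
    g_transvection_conj hA hD i j hij 1 hz]

lemma g_diag_swap (hA : HA g) (hD : HD g) (i j : Fin r) (hij : i ≠ j) (v : Fin r → ℝ)
    (hv : ∀ k, 0 < v k) :
    g (diagonal (fun k => v (Equiv.swap i j k))) = g (diagonal v) := by
  rw [← Wm_conj_diagonal i j hij v]
  exact g_Wm_conj hA hD i j hij (Matrix.PosDef.diagonal hv)

lemma g_sign_conj (hA : HA g) (hD : HD g) :
    ∀ (n : ℕ) (N : Finset (Fin r)), N.card = n → Even n → ∀ {z : Mat}, z.PosDef →
      g (diagonal (fun k => if k ∈ N then (-1:ℝ) else 1) * z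
        * diagonal (fun k => if k ∈ N then (-1:ℝ) else 1)) = g z := by
  intro n
  induction n using Nat.strong_induction_on with
  | _ n IH =>
    intro N hcard heven z hz
    rcases N.eq_empty_or_nonempty with rfl | ⟨i, hi⟩
    · have : (fun k : Fin r => if k ∈ (∅ : Finset (Fin r)) then (-1:ℝ) else 1) = fun _ => 1 := by
        funext k; simp
      rw [this, diagonal_one, Matrix.one_mul, Matrix.mul_one]
    · have hn2 : 2 ≤ n := by
        rcases heven with ⟨m, hm⟩
        have h1 : 1 ≤ n := by
          rw [← hcard]
          exact Finset.card_pos.mpr ⟨i, hi⟩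
        omega
      have hcard_erase : (N.erase i).card = n - 1 := by
        rw [Finset.card_erase_of_mem hi, hcard]
      obtain ⟨j, hj⟩ : (N.erase i).Nonempty := by
        rw [← Finset.card_pos, hcard_erase]; omega
      have hij : j ≠ i := (Finset.mem_erase.mp hj).1
      have hij' : i ≠ j := Ne.symm hij
      have hjN : j ∈ N := (Finset.mem_erase.mp hj).2
      set N₂ := (N.erase i).erase j with hN₂def
      have hiN₂ : i ∉ N₂ := fun h => (Finset.mem_erase.mp (Finset.mem_erase.mp h).2).1 rfl
      have hjN₂ : j ∉ N₂ := fun h => (Finset.mem_erase.mp h).1 rfl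
      have hcard₂ : N₂.card = n - 2 := by
        rw [hN₂def, Finset.card_erase_of_mem hj, hcard_erase]
        omega
      have hmem : ∀ k, (k ∈ N) ↔ (k = i ∨ k = j ∨ k ∈ N₂) := by
        intro k
        constructor
        · intro hk
          rcases eq_or_ne k i with rfl | hki
          · exact Or.inl rfl
          rcases eq_or_ne k j with rfl | hkj
          · exact Or.inr (Or.inl rfl)
          exact Or.inr (Or.inr (Finset.mem_erase.mpr ⟨hkj, Finset.mem_erase.mpr ⟨hki, hk⟩⟩))
        · rintro (rfl | rfl | hk)
          · exact hi
          · exact hjN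
          · exact Finset.mem_of_mem_erase (Finset.mem_of_mem_erase hk)
      set S₂ : Mat := diagonal (fun k => if k ∈ N₂ then (-1:ℝ) else 1) with hS₂def
      have hS₂symm : S₂ᵀ = S₂ := diagonal_transpose _
      have hfun : (fun k => if k ∈ N then (-1:ℝ) else 1)
          = (fun k => (if k = i ∨ k = j then (-1:ℝ) else 1)
            * (if k ∈ N₂ then (-1:ℝ) else 1)) := by
        funext k
        by_cases hki : k = i
        · simp [hki, hi, hiN₂]
        · by_cases hkj : k = j
          · simp [hkj, hjN, hjN₂]
          · by_cases hk2 : k ∈ N₂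
            · have hkN : k ∈ N := (hmem k).mpr (Or.inr (Or.inr hk2))
              simp [hki, hkj, hk2, hkN]
            · have hkN : k ∉ N := fun h => by
                rcases (hmem k).mp h with h' | h' | h' <;> tauto
              simp [hki, hkj, hk2, hkN]
      have hsplit : diagonal (fun k => if k ∈ N then (-1:ℝ) else 1)
          = Wm i j * Wm i j * S₂ := by
        rw [hfun, ← diagonal_mul_diagonal, ← Q_flip_eq_diagonal i j hij', ← Wm_sq i j hij']
      have hsplit2 : diagonal (fun k => if k ∈ N then (-1:ℝ) else 1)
          = S₂ * (Wm i j)ᵀ * (Wm i j)ᵀ := by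
        calc diagonal (fun k => if k ∈ N then (-1:ℝ) else 1)
            = (diagonal (fun k => if k ∈ N then (-1:ℝ) else 1))ᵀ := (diagonal_transpose _).symm
          _ = (Wm i j * Wm i j * S₂)ᵀ := by rw [← hsplit]
          _ = S₂ * (Wm i j)ᵀ * (Wm i j)ᵀ := by
              simp only [transpose_mul, hS₂symm, Matrix.mul_assoc]
      have hS₂det : S₂.det ≠ 0 := by
        rw [hS₂def, det_diagonal]
        apply Finset.prod_ne_zero_iff.mpr
        intro k _
        split <;> norm_num
      have hS₂zPD : (S₂ * z * S₂).PosDef := by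
        have := posDef_congruence hz hS₂det
        rwa [hS₂symm] at this
      have hWdet : (Wm i j).det ≠ 0 := by
        have h1 : Wm i j * (Wm i j)ᵀ = 1 := Wm_mul_transpose i j hij'
        intro h0
        have h2 := congrArg Matrix.det h1
        rw [det_mul, h0, zero_mul] at h2
        simp at h2
      have hinner : (Wm i j * (S₂ * z * S₂) * (Wm i j)ᵀ).PosDef :=
        posDef_congruence hS₂zPD hWdet
      nth_rewrite 2 [hsplit2]
      rw [hsplit]
      have e : (Wm i j * Wm i j * S₂) * z * (S₂ * (Wm i j)ᵀ * (Wm i j)ᵀ)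
          = Wm i j * (Wm i j * (S₂ * z * S₂) * (Wm i j)ᵀ) * (Wm i j)ᵀ := by
        simp only [Matrix.mul_assoc]
      rw [e, g_Wm_conj hA hD i j hij' hinner, g_Wm_conj hA hD i j hij' hS₂zPD]
      exact IH (n-2) (by omega) N₂ hcard₂ (by
        rcases heven with ⟨m, hm⟩
        exact ⟨m - 1, by omega⟩) hz

end G2

section G3

variable {g : Matrix (Fin r) (Fin r) ℝ → ℝ}

/-- one-parameter coordinate family -/
def uf (i : Fin r) (t : ℝ) : Fin r → ℝ := fun k => if k = i then t else 1

lemma uf_pos (i : Fin r) {t : ℝ} (ht : 0 < t) : ∀ k, 0 < uf i t k := by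
  intro k
  unfold uf
  split <;> norm_num [ht]

lemma g_uf_log (hA : HA g) (hD : HD g)
    (hcont : ContinuousOn g {x : Mat | x.PosDef}) (i : Fin r) :
    ∀ t : ℝ, 0 < t →
      g (diagonal (uf i t)) = Real.log t * g (diagonal (uf i (Real.exp 1))) := by
  set φ : ℝ → ℝ := fun s => g (diagonal (uf i (Real.exp s))) with hφ
  have hφadd : ∀ s t : ℝ, φ (s + t) = φ s + φ t := by
    intro s t
    have h := hD (uf i (Real.exp s)) (uf i (Real.exp t))
      (uf_pos i (Real.exp_pos s)) (uf_pos i (Real.exp_pos t))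
    have e : (fun k => uf i (Real.exp s) k * uf i (Real.exp t) k)
        = uf i (Real.exp (s + t)) := by
      funext k
      unfold uf
      by_cases hk : k = i <;> simp [hk, Real.exp_add]
    rw [e] at h
    exact h
  have hφcont : Continuous φ := by
    have hc2 : Continuous fun s : ℝ => diagonal (uf i (Real.exp s)) := by
      apply Continuous.matrix_diagonal
      apply continuous_pi
      intro k
      unfold uf
      split
      · exact Real.continuous_exp
      · exact continuous_const
    exact hcont.comp_continuous hc2 fun s =>
      Matrix.PosDef.diagonal (uf_pos i (Real.exp_pos s))
  have hφlin : ∀ s : ℝ, φ s = s * φ 1 := by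
    intro s
    set F : ℝ →+ ℝ := AddMonoidHom.mk' φ (fun a b => hφadd a b) with hF
    have hFc : Continuous F := hφcont
    have h1 : ⇑(F.toRealLinearMap hFc) = φ := AddMonoidHom.coe_toRealLinearMap F hFc
    have h2 := (F.toRealLinearMap hFc).map_smul s (1:ℝ)
    rw [smul_eq_mul, mul_one] at h2
    rw [h1] at h2
    rw [h2, smul_eq_mul]
  intro t ht
  have : g (diagonal (uf i t)) = φ (Real.log t) := by
    rw [hφ]
    simp [Real.exp_log ht]
  rw [this, hφlin (Real.log t)]

lemma g_uf_eq (hA : HA g) (hD : HD g) (i i₀ : Fin r) (t : ℝ) (ht : 0 < t) :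
    g (diagonal (uf i t)) = g (diagonal (uf i₀ t)) := by
  rcases eq_or_ne i i₀ with rfl | hne
  · rfl
  · have h := g_diag_swap hA hD i₀ i (Ne.symm hne) (uf i t) (uf_pos i ht)
    have e : (fun k => uf i t (Equiv.swap i₀ i k)) = uf i₀ t := by
      funext k
      unfold uf
      rcases eq_or_ne k i₀ with rfl | hk0
      · simp [Equiv.swap_apply_left, hne]
      · rcases eq_or_ne k i with rfl | hki
        · simp [Equiv.swap_apply_right, Ne.symm hne, hk0]
        · simp [Equiv.swap_apply_of_ne_of_ne hk0 hki, hki, hk0]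
    rw [e] at h
    exact h.symm

lemma g_diagonal_eq (hA : HA g) (hD : HD g) (hr : 1 ≤ r)
    (hcont : ContinuousOn g {x : Mat | x.PosDef}) :
    ∃ q : ℝ, ∀ v : Fin r → ℝ, (∀ k, 0 < v k) →
      g (diagonal v) = q * Real.log (∏ k, v k) := by
  have hi₀ : 0 < r := hr
  set i₀ : Fin r := ⟨0, hi₀⟩ with hi₀def
  set q : ℝ := g (diagonal (uf i₀ (Real.exp 1))) with hq
  refine ⟨q, ?_⟩
  have hcoord : ∀ (i : Fin r) (t : ℝ), 0 < t →
      g (diagonal (uf i t)) = q * Real.log t := by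
    intro i t ht
    rw [g_uf_eq hA hD i i₀ t ht, g_uf_log hA hD hcont i₀ t ht, mul_comm]
  have hsum : ∀ (s : Finset (Fin r)) (v : Fin r → ℝ), (∀ k, 0 < v k) →
      (∀ k ∉ s, v k = 1) → g (diagonal v) = ∑ k ∈ s, q * Real.log (v k) := by
    intro s
    induction s using Finset.induction_on with
    | empty =>
      intro v hv h1
      have : v = fun _ => 1 := funext fun k => h1 k (Finset.notMem_empty k)
      rw [this, diagonal_one, Finset.sum_empty]
      exact g_one hD
    | insert i s hni ih =>
      intro v hv h1
      set v' : Fin r → ℝ := Function.update v i 1 with hv'def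
      have hv'pos : ∀ k, 0 < v' k := by
        intro k
        rw [hv'def]
        rcases eq_or_ne k i with rfl | hk
        · simp
        · simp [Function.update_of_ne hk]
          exact hv k
      have h := hD (uf i (v i)) v' (uf_pos i (hv i)) hv'pos
      have e : (fun k => uf i (v i) k * v' k) = v := by
        funext k
        unfold uf
        rcases eq_or_ne k i with rfl | hk
        · simp [hv'def]
        · simp [hk, hv'def, Function.update_of_ne hk]
      rw [e] at h
      rw [h, hcoord i (v i) (hv i), ih v' hv'pos (by
        intro k hk
        rcases eq_or_ne k i with rfl | hke
        · simp [hv'def]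
        · rw [hv'def, Function.update_of_ne hke]
          exact h1 k (by simp [hke, hk]))]
      rw [Finset.sum_insert hni]
      congr 1
      apply Finset.sum_congr rfl
      intro k hk
      have hki : k ≠ i := fun h' => hni (h' ▸ hk)
      rw [hv'def, Function.update_of_ne hki]
  intro v hv
  rw [hsum Finset.univ v hv (fun k hk => absurd (Finset.mem_univ k) hk)]
  rw [← Finset.mul_sum, Real.log_prod (fun k _ => (hv k).ne')]

end G3

open TransvectionStruct in
lemma g_eq_q_log_det {g : Matrix (Fin r) (Fin r) ℝ → ℝ} (hA : HA g) (hD : HD g)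
    (hS : ∀ z : Mat, z.PosDef → g (z * z) = g z + g z) (hr : 1 ≤ r)
    (hcont : ContinuousOn g {x : Mat | x.PosDef}) :
    ∃ q : ℝ, ∀ x : Mat, x.PosDef → g x = q * Real.log x.det := by
  obtain ⟨q, hq⟩ := g_diagonal_eq hA hD hr hcont
  refine ⟨q, fun x hx => ?_⟩
  obtain ⟨L, L', D, hdecomp⟩ := Pivot.exists_list_transvec_mul_diagonal_mul_list_transvec x
  set P₁ : Mat := (L.map toMatrix).prod with hP₁
  set P₂ : Mat := (L'.map toMatrix).prod with hP₂
  have hdet1 : P₁.det = 1 := det_toMatrix_prod L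
  have hdet2 : P₂.det = 1 := det_toMatrix_prod L'
  have hdetx : x.det = ∏ k, D k := by
    rw [hdecomp, det_mul, det_mul, hdet1, hdet2, det_diagonal]
    ring
  have hdx : 0 < x.det := hx.det_pos
  have hD0 : ∀ k, D k ≠ 0 := by
    have hprod : (∏ k, D k) ≠ 0 := by rw [← hdetx]; exact hdx.ne'
    intro k
    exact Finset.prod_ne_zero_iff.mp hprod k (Finset.mem_univ k)
  have hxt : xᵀ = x := by
    have := hx.isHermitian
    rwa [IsHermitian, conjTranspose_eq_transpose_of_trivial] at this
  -- x * x as a congruence of the inner diagonal sandwich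
  have e : x * x = P₁ * (diagonal D * (P₂ * P₂ᵀ) * diagonal D) * P₁ᵀ := by
    nth_rewrite 2 [← hxt]
    rw [hdecomp]
    simp only [transpose_mul, diagonal_transpose, Matrix.mul_assoc]
  have hw : (P₂ * P₂ᵀ).PosDef := by
    have := posDef_congruence (Matrix.PosDef.one) (show P₂.det ≠ 0 by rw [hdet2]; norm_num)
    rwa [Matrix.mul_one] at this
  have hgw : g (P₂ * P₂ᵀ) = 0 := by
    have := g_list_conj hA hD L' (Matrix.PosDef.one)
    rwa [Matrix.mul_one, g_one hD] at this
  have hdetD : (diagonal D).det ≠ 0 := by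
    rw [det_diagonal]
    exact Finset.prod_ne_zero_iff.mpr fun k _ => hD0 k
  have hinner : (diagonal D * (P₂ * P₂ᵀ) * diagonal D).PosDef := by
    have := posDef_congruence hw hdetD
    rwa [diagonal_transpose] at this
  have hgxx : g (x * x) = g (diagonal D * (P₂ * P₂ᵀ) * diagonal D) := by
    rw [e]
    exact g_list_conj hA hD L hinner
  -- split D into sign and absolute value
  set S : Fin r → ℝ := fun k => if D k < 0 then (-1:ℝ) else 1 with hSdef
  set Pa : Fin r → ℝ := fun k => |D k| with hPadef
  have hPapos : ∀ k, 0 < Pa k := fun k => abs_pos.mpr (hD0 k)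
  have hDfun : D = fun k => S k * Pa k := by
    funext k
    rw [hSdef, hPadef]
    dsimp only
    rcases lt_or_ge (D k) 0 with h | h
    · rw [if_pos h, abs_of_neg h]; ring
    · rw [if_neg (not_lt.mpr h), abs_of_nonneg h]; ring
  have hDfun2 : D = fun k => Pa k * S k := by
    rw [hDfun]; funext k; exact mul_comm _ _
  have hDm : diagonal D = diagonal S * diagonal Pa := by
    rw [diagonal_mul_diagonal, show D = fun k => S k * Pa k from hDfun]
  have hDm2 : diagonal D = diagonal Pa * diagonal S := by
    rw [diagonal_mul_diagonal, show D = fun k => Pa k * S k from hDfun2]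
  have e2 : diagonal D * (P₂ * P₂ᵀ) * diagonal D
      = diagonal S * (diagonal Pa * (P₂ * P₂ᵀ) * diagonal Pa) * diagonal S := by
    nth_rewrite 1 [hDm]
    rw [hDm2]
    simp only [Matrix.mul_assoc]
  -- evenness of the number of negative entries
  set N : Finset (Fin r) := Finset.univ.filter (fun k => D k < 0) with hNdef
  have hSN : (fun k => if k ∈ N then (-1:ℝ) else 1) = S := by
    funext k
    rw [hNdef, hSdef]
    simp [Finset.mem_filter]
  have hprodS : (∏ k, S k) = (-1 : ℝ) ^ N.card := by
    rw [hSdef, hNdef]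
    rw [Finset.prod_ite]
    simp [Finset.prod_const]
  have hprodPa : 0 < ∏ k, Pa k := Finset.prod_pos fun k _ => hPapos k
  have hprodD : (∏ k, D k) = (∏ k, S k) * (∏ k, Pa k) := by
    rw [hDfun, Finset.prod_mul_distrib]
  have hSpos : (0:ℝ) < ∏ k, S k := by
    have h1 : 0 < ∏ k, D k := hdetx ▸ hdx
    nlinarith [hprodPa, hprodD ▸ h1]
  have heven : Even N.card := by
    by_contra hodd
    rw [Nat.not_even_iff_odd] at hodd
    rw [hprodS, hodd.neg_one_pow] at hSpos
    norm_num at hSpos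
  have hPawPa : (diagonal Pa * (P₂ * P₂ᵀ) * diagonal Pa).PosDef := by
    have hdetPa : (diagonal Pa).det ≠ 0 := by
      rw [det_diagonal]
      exact (Finset.prod_pos fun k _ => hPapos k).ne'
    have := posDef_congruence hw hdetPa
    rwa [diagonal_transpose] at this
  have hsign := g_sign_conj hA hD N.card N rfl heven hPawPa
  rw [hSN] at hsign
  have hPaPD : (diagonal Pa).PosDef := Matrix.PosDef.diagonal hPapos
  have hcong := hA (diagonal Pa) (P₂ * P₂ᵀ) hPaPD hw
  have hPa2 : diagonal Pa * diagonal Pa = diagonal (fun k => Pa k * Pa k) :=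
    diagonal_mul_diagonal _ _
  have hgPa2 := hq (fun k => Pa k * Pa k) (fun k => mul_pos (hPapos k) (hPapos k))
  have hprodPa2 : (∏ k, Pa k * Pa k) = x.det * x.det := by
    rw [Finset.prod_mul_distrib]
    have : (∏ k, Pa k) = x.det := by
      rw [hPadef]
      have : (∏ k, |D k|) = |∏ k, D k| := (Finset.abs_prod _ _).symm
      rw [this, ← hdetx, abs_of_pos hdx]
    rw [this]
  have hlog : Real.log (x.det * x.det) = 2 * Real.log x.det := by
    rw [Real.log_mul hdx.ne' hdx.ne']; ring
  have hfinal := hS x hx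
  rw [hgxx, e2, hsign, hcong, hgw, add_zero, hPa2, hgPa2, hprodPa2, hlog] at hfinal
  linarith
end LogPexiderAux

open LogPexiderAux in
/-- **Logarithmic Pexider functional equation on the cone of positive definite matrices**:
continuous real functions `f₁, f₂, f₃` on the cone of `r × r` real symmetric positive
definite matrices satisfying `f₁(x) + f₂(y) = f₃(x^{1/2} · y · x^{1/2})` (with `x^{1/2}`
the unique positive definite square root of `x`) have the form `q log det + const`. -/
theorem log_pexider_on_posDef_cone {r : ℕ} (hr : 1 ≤ r)
    (f₁ f₂ f₃ : Matrix (Fin r) (Fin r) ℝ → ℝ)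
    (h₁ : ContinuousOn f₁ {x : Matrix (Fin r) (Fin r) ℝ | x.PosDef})
    (h₂ : ContinuousOn f₂ {x : Matrix (Fin r) (Fin r) ℝ | x.PosDef})
    (h₃ : ContinuousOn f₃ {x : Matrix (Fin r) (Fin r) ℝ | x.PosDef})
    (heq : ∀ (x y : Matrix (Fin r) (Fin r) ℝ) (hx : x.PosDef) (_ : y.PosDef),
      f₁ x + f₂ y = f₃ (hx.posSemidef.sqrt * y * hx.posSemidef.sqrt)) :
    ∃ q γ₁ γ₂ : ℝ, ∀ x : Matrix (Fin r) (Fin r) ℝ, x.PosDef →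
      f₁ x = q * Real.log x.det + γ₁ ∧
      f₂ x = q * Real.log x.det + γ₂ ∧
      f₃ x = q * Real.log x.det + γ₁ + γ₂ := by
  classical
  set G : Matrix (Fin r) (Fin r) ℝ → ℝ := fun x => f₃ x - f₁ 1 - f₂ 1 with hGdef
  have f₃x : ∀ x : Matrix (Fin r) (Fin r) ℝ, ∀ hx : x.PosDef, f₃ x = f₁ x + f₂ 1 := by
    intro x hx
    have h := heq x 1 hx Matrix.PosDef.one
    rw [Matrix.mul_one, hx.posSemidef.sqrt_mul_self] at h
    exact h.symm
  have f₃y : ∀ y : Matrix (Fin r) (Fin r) ℝ, ∀ hy : y.PosDef, f₃ y = f₁ 1 + f₂ y := by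
    intro y hy
    have h := heq 1 y Matrix.PosDef.one hy
    rw [sqrt_one' Matrix.PosDef.one.posSemidef, Matrix.one_mul, Matrix.mul_one] at h
    exact h.symm
  have hg : ∀ (x y : Matrix (Fin r) (Fin r) ℝ) (hx : x.PosDef) (hy : y.PosDef),
      G (hx.posSemidef.sqrt * y * hx.posSemidef.sqrt) = G x + G y := by
    intro x y hx hy
    have h := heq x y hx hy
    simp only [hGdef]
    rw [← h, f₃x x hx, f₃y y hy]
    ring
  have hA : LogPexiderAux.HA G := by
    intro p z hp hz
    have hpt : pᵀ = p := by
      have := hp.isHermitian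
      rwa [Matrix.IsHermitian, Matrix.conjTranspose_eq_transpose_of_trivial] at this
    have hpp : (p * p).PosDef := by
      have h := posDef_congruence Matrix.PosDef.one (show p.det ≠ 0 from hp.det_pos.ne')
      rwa [Matrix.mul_one, hpt] at h
    have hsq : hpp.posSemidef.sqrt = p := sqrt_eq_of_posDef hp hpp.posSemidef rfl
    have h := hg (p * p) z hpp hz
    rwa [hsq] at h
  have hD : LogPexiderAux.HD G := by
    intro u v hu hv
    have hxd : (Matrix.diagonal u).PosDef := Matrix.PosDef.diagonal hu
    have hsq : hxd.posSemidef.sqrt = Matrix.diagonal (fun k => Real.sqrt (u k)) :=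
      sqrt_diagonal' u hu _
    have h := hg (Matrix.diagonal u) (Matrix.diagonal v) hxd (Matrix.PosDef.diagonal hv)
    rw [hsq, Matrix.diagonal_mul_diagonal, Matrix.diagonal_mul_diagonal] at h
    have e : (fun k => Real.sqrt (u k) * v k * Real.sqrt (u k)) = fun k => u k * v k := by
      funext k
      rw [show Real.sqrt (u k) * v k * Real.sqrt (u k)
          = v k * (Real.sqrt (u k) * Real.sqrt (u k)) by ring,
        Real.mul_self_sqrt (hu k).le, mul_comm]
    rw [e] at h
    exact h
  have hS : ∀ z : Matrix (Fin r) (Fin r) ℝ, z.PosDef → G (z * z) = G z + G z := by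
    intro z hz
    have h := hg z z hz hz
    set s := hz.posSemidef.sqrt with hsdef
    have hss : s * s = z := hz.posSemidef.sqrt_mul_self
    have e : s * z * s = z * z := by
      rw [← hss]
      simp only [Matrix.mul_assoc]
    rwa [e] at h
  have hcontG : ContinuousOn G {x : Matrix (Fin r) (Fin r) ℝ | x.PosDef} :=
    (h₃.sub continuousOn_const).sub continuousOn_const
  obtain ⟨q, hqlog⟩ := g_eq_q_log_det hA hD hS hr hcontG
  refine ⟨q, f₁ 1, f₂ 1, fun x hx => ?_⟩
  have h3 := hqlog x hx
  simp only [hGdef] at h3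
  have e1 : f₃ x = f₁ x + f₂ 1 := f₃x x hx
  have e2 : f₃ x = f₁ 1 + f₂ x := f₃y x hx
  refine ⟨by linarith, by linarith, by linarith⟩
end

section
/- Let r ≥ 1 and define Ψ on pairs of r×r real symmetric positive definite matrices by Ψ(x, y) = ((x+y)⁻¹, x⁻¹ - (x+y)⁻¹). Then: (i) for all x, y ∈ V₊ both components of Ψ(x, y) lie in V₊, so Ψ maps V₊ × V₊ into V₊ × V₊; and (ii) Ψ is an involution, i.e., Ψ(Ψ(x, y)) = (x, y) for all x, y ∈ V₊; in particular Ψ is a bijection of V₊ × V₊ onto itself with Ψ⁻¹ = Ψ. -/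
open Matrix

/-- The Matsumoto–Yor map `Ψ(x, y) = ((x+y)⁻¹, x⁻¹ - (x+y)⁻¹)` on pairs of matrices. -/
noncomputable def MYmap {r : ℕ} (xy : Matrix (Fin r) (Fin r) ℝ × Matrix (Fin r) (Fin r) ℝ) :
    Matrix (Fin r) (Fin r) ℝ × Matrix (Fin r) (Fin r) ℝ :=
  ((xy.1 + xy.2)⁻¹, xy.1⁻¹ - (xy.1 + xy.2)⁻¹)

lemma auxConj {n : Type*} [Fintype n] [DecidableEq n] {A B : Matrix n n ℝ}
    (hA : A.PosDef) (hB : IsUnit B.det) : (Bᴴ * A * B).PosDef := by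
  haveI := B.invertibleOfIsUnitDet hB
  refine PosDef.of_dotProduct_mulVec_pos (isHermitian_conjTranspose_mul_mul B hA.1) fun x hx => ?_
  have h1 : B *ᵥ x ≠ 0 := fun h =>
    hx (mulVec_injective_of_invertible B (h.trans (Matrix.mulVec_zero B).symm))
  have := hA.dotProduct_mulVec_pos h1
  simpa [star_mulVec, dotProduct_mulVec, ← vecMul_vecMul, vecMul_transpose] using this

lemma auxKey {n : Type*} [Fintype n] [DecidableEq n] {x y : Matrix n n ℝ}
    (hx : x.PosDef) (hy : y.PosDef) : (x⁻¹ - (x + y)⁻¹).PosDef := by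
  set s := x + y with hs
  have hsp : s.PosDef := hx.add hy
  have hxu : IsUnit x.det := isUnit_iff_ne_zero.mpr hx.det_pos.ne'
  have hsu : IsUnit s.det := isUnit_iff_ne_zero.mpr hsp.det_pos.ne'
  have hx1 : x⁻¹ * x = 1 := nonsing_inv_mul x hxu
  have hx2' : ∀ z : Matrix n n ℝ, x * (x⁻¹ * z) = z := fun z => by
    rw [← Matrix.mul_assoc, mul_nonsing_inv x hxu, Matrix.one_mul]
  have hs1' : ∀ z : Matrix n n ℝ, s⁻¹ * (s * z) = z := fun z => by
    rw [← Matrix.mul_assoc, nonsing_inv_mul s hsu, Matrix.one_mul]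
  have hs2 : s * s⁻¹ = 1 := mul_nonsing_inv s hsu
  have hyeq : y = s - x := by rw [hs]; abel
  have key : x⁻¹ - s⁻¹ = s⁻¹ᴴ * (y * x⁻¹ * y + y) * s⁻¹ := by
    rw [(hsp.inv.isHermitian).eq, hyeq]
    simp only [Matrix.mul_sub, Matrix.sub_mul, Matrix.mul_add, Matrix.add_mul,
      Matrix.mul_assoc, hx1, hx2', hs1', hs2, Matrix.mul_one, Matrix.one_mul]
    abel
  rw [show (x + y)⁻¹ = s⁻¹ from rfl, key]
  refine auxConj ?_ (isUnit_iff_ne_zero.mpr hsp.inv.det_pos.ne')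
  have hyxy : (y * x⁻¹ * y).PosDef := by
    have := auxConj (A := x⁻¹) (B := y) hx.inv (isUnit_iff_ne_zero.mpr hy.det_pos.ne')
    rwa [show yᴴ = y from hy.isHermitian.eq] at this
  exact hyxy.add hy

/-- The map `Ψ(x, y) = ((x+y)⁻¹, x⁻¹ - (x+y)⁻¹)` maps `V₊ × V₊` into itself and is an
involution there; in particular it is a bijection of `V₊ × V₊` onto itself which is its
own inverse. -/
theorem MYmap_involutive {r : ℕ} (hr : 1 ≤ r) :
    (∀ x y : Matrix (Fin r) (Fin r) ℝ, x.PosDef → y.PosDef →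
      (MYmap (x, y)).1.PosDef ∧ (MYmap (x, y)).2.PosDef ∧
      MYmap (MYmap (x, y)) = (x, y)) ∧
    Set.BijOn (MYmap (r := r))
      {xy | xy.1.PosDef ∧ xy.2.PosDef} {xy | xy.1.PosDef ∧ xy.2.PosDef} ∧
    Set.InvOn (MYmap (r := r)) (MYmap (r := r))
      {xy | xy.1.PosDef ∧ xy.2.PosDef} {xy | xy.1.PosDef ∧ xy.2.PosDef} := by
  have h1 : ∀ x y : Matrix (Fin r) (Fin r) ℝ, x.PosDef → y.PosDef →
      (MYmap (x, y)).1.PosDef ∧ (MYmap (x, y)).2.PosDef ∧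
      MYmap (MYmap (x, y)) = (x, y) := by
    intro x y hx hy
    have hsp : (x + y).PosDef := hx.add hy
    have hxu : IsUnit x.det := isUnit_iff_ne_zero.mpr hx.det_pos.ne'
    have hsu : IsUnit (x + y).det := isUnit_iff_ne_zero.mpr hsp.det_pos.ne'
    refine ⟨hsp.inv, auxKey hx hy, ?_⟩
    simp only [MYmap]
    have e1 : (x + y)⁻¹ + (x⁻¹ - (x + y)⁻¹) = x⁻¹ := by abel
    rw [e1, nonsing_inv_nonsing_inv x hxu, nonsing_inv_nonsing_inv (x + y) hsu]
    refine Prod.ext rfl ?_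
    simp only
    abel
  have hmaps : Set.MapsTo (MYmap (r := r)) {xy | xy.1.PosDef ∧ xy.2.PosDef}
      {xy | xy.1.PosDef ∧ xy.2.PosDef} := by
    intro p hp
    have := h1 p.1 p.2 hp.1 hp.2
    exact ⟨this.1, this.2.1⟩
  have hinv : Set.InvOn (MYmap (r := r)) (MYmap (r := r))
      {xy | xy.1.PosDef ∧ xy.2.PosDef} {xy | xy.1.PosDef ∧ xy.2.PosDef} := by
    constructor <;> intro p hp <;>
      simpa using (h1 p.1 p.2 hp.1 hp.2).2.2
  exact ⟨h1, hinv.bijOn hmaps hmaps, hinv⟩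
end

section
/- Let r ≥ 1 and let x be an r×r real symmetric positive definite matrix. The linear endomorphism Q_x of the real vector space Sym_r of r×r real symmetric matrices, defined by Q_x(s) = x · s · x (ordinary matrix products), has determinant equal to (det x)^{r+1}. -/
open Matrix

noncomputable section

/-- The real vector space of symmetric `r × r` real matrices, as a submodule of the
space of all `r × r` real matrices. -/
def SymMat (r : ℕ) : Submodule ℝ (Matrix (Fin r) (Fin r) ℝ) where
  carrier := {A | A.IsSymm}
  add_mem' := fun ha hb => ha.add hb
  zero_mem' := Matrix.isSymm_zero
  smul_mem' := fun c _ hA => hA.smul c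

/-- The quadratic representation `Q_x : s ↦ x · s · x`, as a linear endomorphism of the
space of symmetric matrices (for `x` symmetric). -/
def quadRep {r : ℕ} (x : Matrix (Fin r) (Fin r) ℝ) (hx : x.IsSymm) :
    SymMat r →ₗ[ℝ] SymMat r where
  toFun s := ⟨x * (s : Matrix (Fin r) (Fin r) ℝ) * x, by
    show (x * (s : Matrix (Fin r) (Fin r) ℝ) * x)ᵀ = _
    rw [Matrix.transpose_mul, Matrix.transpose_mul,
      show xᵀ = x from hx,
      show ((s : Matrix (Fin r) (Fin r) ℝ))ᵀ = (s : Matrix (Fin r) (Fin r) ℝ) from s.prop,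
      Matrix.mul_assoc]⟩
  map_add' s t := by
    apply Subtype.ext
    simp [Matrix.mul_add, Matrix.add_mul]
  map_smul' c s := by
    apply Subtype.ext
    simp [Matrix.mul_smul, Matrix.smul_mul]

/-- A real positive definite matrix is symmetric. -/
theorem Matrix.PosDef.isSymmReal {r : ℕ} {x : Matrix (Fin r) (Fin r) ℝ}
    (hx : x.PosDef) : x.IsSymm := by
  show xᵀ = x
  rw [← Matrix.conjTranspose_eq_transpose_of_trivial]
  exact hx.1

namespace DetQuadRepAux

variable {r : ℕ}

/-- Index type for the entries on or above the diagonal. -/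
abbrev Idx (r : ℕ) := {p : Fin r × Fin r // p.1 ≤ p.2}

/-- A symmetric matrix is determined by its upper-triangular entries. -/
def symEquiv (r : ℕ) : SymMat r ≃ₗ[ℝ] (Idx r → ℝ) where
  toFun A p := A.1 p.1.1 p.1.2
  map_add' _ _ := rfl
  map_smul' _ _ := rfl
  invFun c := ⟨fun a b => if h : a ≤ b then c ⟨(a, b), h⟩ else c ⟨(b, a), le_of_not_ge h⟩, by
    show Matrix.transpose _ = _
    funext a b
    show (if h : b ≤ a then _ else _) = (if h : a ≤ b then _ else _)
    by_cases hab : a ≤ b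
    · by_cases hba : b ≤ a
      · have hab' : a = b := le_antisymm hab hba
        subst hab'
        rfl
      · rw [dif_neg hba, dif_pos hab]
    · rw [dif_pos (le_of_not_ge hab), dif_neg hab]⟩
  left_inv A := by
    apply Subtype.ext
    funext a b
    by_cases h : a ≤ b
    · simp [h]
    · have hs : A.1 b a = A.1 a b := congrFun (congrFun A.2 a) b
      simp [h, hs]
  right_inv c := by
    funext p
    show dite _ _ _ = _
    rw [dif_pos p.2]

/-- Conjugation by an orthogonal matrix, as a linear automorphism of the symmetric
matrices. -/
def conjEquiv (u : Matrix (Fin r) (Fin r) ℝ) (h1 : uᵀ * u = 1) (h2 : u * uᵀ = 1) :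
    SymMat r ≃ₗ[ℝ] SymMat r :=
  LinearEquiv.ofLinear
    { toFun := fun s => ⟨uᵀ * s.1 * u, by
        show (uᵀ * s.1 * u)ᵀ = _
        rw [Matrix.transpose_mul, Matrix.transpose_mul, Matrix.transpose_transpose,
          show (s.1)ᵀ = s.1 from s.2, Matrix.mul_assoc]⟩
      map_add' := fun s t => by
        apply Subtype.ext
        simp [Matrix.mul_add, Matrix.add_mul]
      map_smul' := fun c s => by
        apply Subtype.ext
        simp [Matrix.mul_smul, Matrix.smul_mul] }
    { toFun := fun s => ⟨u * s.1 * uᵀ, by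
        show (u * s.1 * uᵀ)ᵀ = _
        rw [Matrix.transpose_mul, Matrix.transpose_mul, Matrix.transpose_transpose,
          show (s.1)ᵀ = s.1 from s.2, Matrix.mul_assoc]⟩
      map_add' := fun s t => by
        apply Subtype.ext
        simp [Matrix.mul_add, Matrix.add_mul]
      map_smul' := fun c s => by
        apply Subtype.ext
        simp [Matrix.mul_smul, Matrix.smul_mul] }
    (by
      apply LinearMap.ext
      intro s
      apply Subtype.ext
      show uᵀ * (u * s.1 * uᵀ) * u = s.1
      rw [← Matrix.mul_assoc, ← Matrix.mul_assoc, h1, Matrix.one_mul, Matrix.mul_assoc, h1,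
        Matrix.mul_one])
    (by
      apply LinearMap.ext
      intro s
      apply Subtype.ext
      show u * (uᵀ * s.1 * u) * uᵀ = s.1
      rw [← Matrix.mul_assoc, ← Matrix.mul_assoc, h2, Matrix.one_mul, Matrix.mul_assoc, h2,
        Matrix.mul_one])

theorem quadRep_conj (x : Matrix (Fin r) (Fin r) ℝ) (hx : x.IsSymm)
    (u : Matrix (Fin r) (Fin r) ℝ) (h1 : uᵀ * u = 1) (h2 : u * uᵀ = 1)
    (y : Matrix (Fin r) (Fin r) ℝ) (hy : y.IsSymm) (hxy : y = uᵀ * x * u) :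
    LinearMap.det (quadRep y hy) = LinearMap.det (quadRep x hx) := by
  subst hxy
  rw [← LinearMap.det_conj (quadRep x hx) (conjEquiv u h1 h2)]
  congr 1
  apply LinearMap.ext
  intro s
  apply Subtype.ext
  show (uᵀ * x * u) * s.1 * (uᵀ * x * u) = uᵀ * (x * (u * s.1 * uᵀ) * x) * u
  simp only [Matrix.mul_assoc]

/-- The determinant of the quadratic representation of a diagonal matrix. -/
theorem det_quadRep_diagonal (lam : Fin r → ℝ) (hd : (Matrix.diagonal lam).IsSymm) :
    LinearMap.det (quadRep (Matrix.diagonal lam) hd)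
      = ∏ p : Idx r, lam p.1.1 * lam p.1.2 := by
  rw [← LinearMap.det_conj (quadRep (Matrix.diagonal lam) hd) (symEquiv r)]
  have key : ((symEquiv r : SymMat r →ₗ[ℝ] (Idx r → ℝ)) ∘ₗ
      quadRep (Matrix.diagonal lam) hd ∘ₗ ((symEquiv r).symm : (Idx r → ℝ) →ₗ[ℝ] SymMat r))
      = Matrix.toLin' (Matrix.diagonal fun p : Idx r => lam p.1.1 * lam p.1.2) := by
    apply LinearMap.ext
    intro c
    funext p
    show (Matrix.diagonal lam * ((symEquiv r).symm c).1 * Matrix.diagonal lam) p.1.1 p.1.2 = _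
    rw [Matrix.mul_diagonal, Matrix.diagonal_mul]
    have hc : ((symEquiv r).symm c).1 p.1.1 p.1.2 = c p := by
      show dite _ _ _ = _
      rw [dif_pos p.2]
    rw [hc, Matrix.toLin'_apply]
    show _ = (Matrix.diagonal (fun p : Idx r => lam p.1.1 * lam p.1.2) *ᵥ c) p
    rw [Matrix.mulVec_diagonal]
    ring
  rw [key, LinearMap.det_toLin']
  rw [Matrix.det_diagonal]

/-- The combinatorial identity `∏_{i ≤ j} λᵢ λⱼ = (∏ᵢ λᵢ)^{r+1}` for positive `λ`. -/
theorem prod_pairs (lam : Fin r → ℝ) (hpos : ∀ i, 0 < lam i) :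
    (∏ p : Idx r, lam p.1.1 * lam p.1.2) = (∏ i, lam i) ^ (r + 1) := by
  classical
  set f : Fin r × Fin r → ℝ := fun p => lam p.1 * lam p.2 with hf
  set s : Finset (Fin r × Fin r) := Finset.univ.filter fun p => p.1 ≤ p.2 with hs
  set t : Finset (Fin r × Fin r) := Finset.univ.filter fun p => p.2 ≤ p.1 with ht
  have hsub : (∏ p : Idx r, lam p.1.1 * lam p.1.2) = ∏ p ∈ s, f p := by
    rw [Finset.prod_subtype (p := fun p : Fin r × Fin r => p.1 ≤ p.2) s
      (fun p => by simp [hs]) f]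
  have hunion : s ∪ t = Finset.univ := by
    ext p
    simp [hs, ht, le_total p.1 p.2]
  have hinter : s ∩ t = Finset.univ.image fun i : Fin r => (i, i) := by
    ext p
    simp only [hs, ht, Finset.mem_inter, Finset.mem_filter, Finset.mem_univ, true_and,
      Finset.mem_image, Prod.ext_iff]
    constructor
    · rintro ⟨h1, h2⟩
      exact ⟨p.1, ⟨rfl, le_antisymm h1 h2⟩⟩
    · rintro ⟨i, hi1, hi2⟩
      rw [← hi1, ← hi2]
      exact ⟨le_refl i, le_refl i⟩
  have hts : t = s.image Prod.swap := by
    ext p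
    simp only [hs, ht, Finset.mem_filter, Finset.mem_univ, true_and, Finset.mem_image]
    constructor
    · intro h
      exact ⟨p.swap, h, Prod.swap_swap p⟩
    · rintro ⟨q, hq, rfl⟩
      exact hq
  have hprod_t : ∏ p ∈ t, f p = ∏ p ∈ s, f p := by
    rw [hts, Finset.prod_image (fun a _ b _ h => Prod.swap_injective h)]
    apply Finset.prod_congr rfl
    intro p _
    simp [hf, mul_comm]
  have hprod_inter : ∏ p ∈ s ∩ t, f p = ∏ i, lam i ^ 2 := by
    rw [hinter, Finset.prod_image (fun a _ b _ h => by simpa using (Prod.ext_iff.1 h).1)]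
    apply Finset.prod_congr rfl
    intro i _
    simp [hf, sq]
  have hprod_univ : ∏ p ∈ Finset.univ, f p = (∏ i, lam i) ^ r * (∏ i, lam i) ^ r := by
    rw [show (∏ p ∈ Finset.univ, f p) = ∏ p : Fin r × Fin r, f p from rfl,
      Fintype.prod_prod_type]
    have step : ∀ i : Fin r, ∏ j : Fin r, lam i * lam j = lam i ^ r * ∏ j, lam j := by
      intro i
      rw [Finset.prod_mul_distrib, Finset.prod_const, Finset.card_univ, Fintype.card_fin]
    calc (∏ i : Fin r, ∏ j : Fin r, f (i, j)) = ∏ i : Fin r, (lam i ^ r * ∏ j, lam j) :=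
          Finset.prod_congr rfl fun i _ => step i
      _ = (∏ i, lam i) ^ r * (∏ i, lam i) ^ r := by
          rw [Finset.prod_mul_distrib, Finset.prod_pow, Finset.prod_const, Finset.card_univ,
            Fintype.card_fin]
  have hkey : (∏ p ∈ s, f p) * ∏ p ∈ t, f p = (∏ p ∈ s ∪ t, f p) * ∏ p ∈ s ∩ t, f p :=
    (Finset.prod_union_inter).symm
  rw [hunion, hprod_t, hprod_univ, hprod_inter] at hkey
  have hsq : (∏ p ∈ s, f p) ^ 2 = ((∏ i, lam i) ^ (r + 1)) ^ 2 := by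
    rw [sq, hkey, Finset.prod_pow]
    ring
  have hs_pos : 0 < ∏ p ∈ s, f p := by
    apply Finset.prod_pos
    intro p _
    exact mul_pos (hpos p.1) (hpos p.2)
  have hl_pos : 0 ≤ (∏ i, lam i) ^ (r + 1) :=
    pow_nonneg (Finset.prod_pos (fun i _ => hpos i)).le _
  rw [hsub]
  exact (sq_eq_sq₀ hs_pos.le hl_pos).1 hsq

end DetQuadRepAux

/-- **Determinant of the quadratic representation**: for a symmetric positive definite
`r × r` real matrix `x`, the determinant of the linear endomorphism `Q_x : s ↦ x · s · x`
of the space of symmetric matrices equals `(det x)^(r+1)`. -/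
theorem det_quadRep {r : ℕ} (hr : 1 ≤ r) (x : Matrix (Fin r) (Fin r) ℝ)
    (hx : x.PosDef) :
    LinearMap.det (quadRep x hx.isSymmReal) = x.det ^ (r + 1) := by
  classical
  have hH : x.IsHermitian := hx.1
  set u : Matrix (Fin r) (Fin r) ℝ := (Matrix.IsHermitian.eigenvectorUnitary hH : Matrix (Fin r) (Fin r) ℝ) with hu
  have hstar : star u = uᵀ := by
    rw [Matrix.star_eq_conjTranspose, Matrix.conjTranspose_eq_transpose_of_trivial]
  have hmem := (Matrix.IsHermitian.eigenvectorUnitary hH).2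
  have h1 : uᵀ * u = 1 := by
    rw [← hstar]
    exact (Unitary.mem_iff.1 hmem).1
  have h2 : u * uᵀ = 1 := by
    rw [← hstar]
    exact (Unitary.mem_iff.1 hmem).2
  have hdiag : uᵀ * x * u = Matrix.diagonal hH.eigenvalues := by
    have := hH.conjStarAlgAut_star_eigenvectorUnitary
    rw [Unitary.conjStarAlgAut_star_apply] at this
    rw [hstar] at this
    rw [this]
    congr 1
  have hD : (Matrix.diagonal hH.eigenvalues).IsSymm := Matrix.isSymm_diagonal _
  have hdet1 : LinearMap.det (quadRep (Matrix.diagonal hH.eigenvalues) hD)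
      = LinearMap.det (quadRep x hx.isSymmReal) :=
    DetQuadRepAux.quadRep_conj x hx.isSymmReal u h1 h2 _ hD hdiag.symm
  rw [← hdet1, DetQuadRepAux.det_quadRep_diagonal,
    DetQuadRepAux.prod_pairs hH.eigenvalues hx.eigenvalues_pos]
  congr 1
  have := hH.det_eq_prod_eigenvalues
  simpa [RCLike.ofReal_real_eq_id] using this.symm

end
end
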